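/- arXiv:1211.0709 — 2 statements merged into one kernel-verified Lean document; each statement's English description precedes it below -/
import Mathlib

section
/- For any finite simple undirected graph G on n ≥ 3 vertices, the quantity ∑_{i ∈ V} (d* − d_i), where d* is the maximum degree and d_i the degree of vertex i, satisfies ∑_i (d* − d_i) ≤ (n−1)(n−2). -/
open Finset

theorem sum_maxDegree_sub_degree_le {V : Type*} [Fintype V] (G : SimpleGraph V)
    [DecidableRel G.Adj] (hn : 3 ≤ Fintype.card V) :
    ∑ v, (G.maxDegree - G.degree v) ≤ (Fintype.card V - 1) * (Fintype.card V - 2) := by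
  have hne : Nonempty V := Fintype.card_pos_iff.mp (by omega)
  classical
  obtain ⟨u, hu⟩ := G.exists_maximal_degree_vertex
  set n := Fintype.card V with hn'
  set D := G.maxDegree with hD
  have hdeg : ∀ v, G.degree v ≤ D := fun v => G.degree_le_maxDegree v
  have hsum : ∑ v, (D - G.degree v) + ∑ v, G.degree v = n * D := by
    rw [← Finset.sum_add_distrib]
    have h : ∀ v ∈ (univ : Finset V), (D - G.degree v) + G.degree v = D := by
      intro v _
      have := hdeg v
      omega
    rw [Finset.sum_congr rfl h, Finset.sum_const, Finset.card_univ, smul_eq_mul]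
  -- lower bound on total degree
  have hlow : 2 * D ≤ ∑ v, G.degree v := by
    have hsub : insert u (G.neighborFinset u) ⊆ univ := Finset.subset_univ _
    have hnotmem : u ∉ G.neighborFinset u := by
      simp [SimpleGraph.mem_neighborFinset]
    have h1 : ∑ v ∈ insert u (G.neighborFinset u), G.degree v ≤ ∑ v, G.degree v :=
      Finset.sum_le_sum_of_subset hsub
    have h2 : D + D ≤ ∑ v ∈ insert u (G.neighborFinset u), G.degree v := by
      rw [Finset.sum_insert hnotmem]
      have h3 : D ≤ ∑ v ∈ G.neighborFinset u, G.degree v := by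
        calc D = G.degree u := hu
          _ = ∑ v ∈ G.neighborFinset u, 1 := by
              rw [Finset.sum_const, smul_eq_mul, mul_one]; rfl
          _ ≤ ∑ v ∈ G.neighborFinset u, G.degree v := by
              apply Finset.sum_le_sum
              intro v hv
              rw [SimpleGraph.mem_neighborFinset] at hv
              have : u ∈ G.neighborFinset v := by
                rw [SimpleGraph.mem_neighborFinset]; exact hv.symm
              have := Finset.card_pos.mpr ⟨u, this⟩
              rw [← SimpleGraph.card_neighborFinset_eq_degree]; exact this
      exact add_le_add (le_of_eq hu) h3
    omega
  have hDn : D ≤ n - 1 := by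
    have := G.degree_lt_card_verts u
    omega
  have key : ∑ v, (D - G.degree v) ≤ (n - 2) * D := by
    have : ∑ v, (D - G.degree v) ≤ n * D - 2 * D := by omega
    calc ∑ v, (D - G.degree v) ≤ n * D - 2 * D := this
      _ = (n - 2) * D := by rw [Nat.sub_mul]
  calc ∑ v, (D - G.degree v) ≤ (n - 2) * D := key
    _ ≤ (n - 2) * (n - 1) := Nat.mul_le_mul_left _ hDn
    _ = (n - 1) * (n - 2) := Nat.mul_comm _ _
end

section
/- The function fragile_G(V') = C_{G(V−V')} (network-wide degree centrality of the subgraph induced on V − V') is not monotone: there exists a finite simple graph G with vertices u, v such that fragile_G({u}) > fragile_G(∅) and fragile_G({v}) < fragile_G(∅). -/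
open Finset

open scoped Classical in
noncomputable def centrality {V : Type*} [Fintype V] (G : SimpleGraph V) : ℚ :=
  (∑ v, ((G.maxDegree : ℚ) - (G.degree v : ℚ))) /
    (((Fintype.card V : ℚ) - 1) * ((Fintype.card V : ℚ) - 2))

open scoped Classical in
noncomputable def fragile {V : Type*} [Fintype V] (G : SimpleGraph V) (V' : Set V) : ℚ :=
  centrality (G.induce V'ᶜ)

lemma centrality_val {V : Type*} [Fintype V] (G : SimpleGraph V) [h : DecidableRel G.Adj]
    (n D s : ℕ) (hn : Fintype.card V = n) (hD : G.maxDegree = D)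
    (hs : (∑ v, G.degree v) = s) :
    centrality G = (((n : ℚ) * D - s)) / (((n : ℚ) - 1) * ((n : ℚ) - 2)) := by
  have : centrality G = (∑ v, ((G.maxDegree : ℚ) - (G.degree v : ℚ))) /
      (((Fintype.card V : ℚ) - 1) * ((Fintype.card V : ℚ) - 2)) := by
    unfold centrality; congr!
  rw [this, Finset.sum_sub_distrib, Finset.sum_const, card_univ, hn, hD,
    ← Nat.cast_sum, hs, nsmul_eq_mul]

lemma fragile_val {V : Type*} [Fintype V] (G : SimpleGraph V) (V' : Set V)
    [DecidablePred (· ∈ V'ᶜ)] [DecidableRel G.Adj]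
    (n D s : ℕ) (hn : Fintype.card ↥(V'ᶜ) = n) (hD : (G.induce V'ᶜ).maxDegree = D)
    (hs : (∑ v, (G.induce V'ᶜ).degree v) = s) :
    fragile G V' = (((n : ℚ) * D - s)) / (((n : ℚ) - 1) * ((n : ℚ) - 2)) := by
  have : fragile G V' = centrality (G.induce V'ᶜ) := by unfold fragile; congr!
  rw [this, centrality_val _ n D s hn hD hs]

def myG : SimpleGraph (Fin 6) := SimpleGraph.fromRel
  (fun a b => (a, b) ∈ [((0:Fin 6),(1:Fin 6)),(0,2),(0,3),(0,4),(0,5),(1,2)])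

instance : DecidableRel myG.Adj := fun a b =>
  decidable_of_iff' _ (SimpleGraph.fromRel_adj _ a b)

instance : DecidablePred (· ∈ ((∅ : Set (Fin 6))ᶜ)) :=
  fun _ => decidable_of_iff True (by simp)

instance (u : Fin 6) : DecidablePred (· ∈ (({u} : Set (Fin 6))ᶜ)) :=
  fun x => decidable_of_iff (x ≠ u) (by simp)

theorem fragile_not_monotone :
    ∃ (n : ℕ) (G : SimpleGraph (Fin n)) (u v : Fin n),
      fragile G {u} > fragile G ∅ ∧ fragile G {v} < fragile G ∅ := by
  refine ⟨6, myG, 1, 3, ?_, ?_⟩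
  · rw [fragile_val myG {1} 5 4 8 (by decide) (by decide) (by decide),
      fragile_val myG ∅ 6 5 12 (by decide) (by decide) (by decide)]
    norm_num
  · rw [fragile_val myG {3} 5 4 10 (by decide) (by decide) (by decide),
      fragile_val myG ∅ 6 5 12 (by decide) (by decide) (by decide)]
    norm_num
end
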